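/- arXiv:2603.13459 — 4 statements merged into one kernel-verified Lean document; each statement's English description precedes it below -/
import Mathlib

section
/- Closed form of the task representation under simplified linear self-attention (Proposition 3.9): Fix d, n ∈ ℕ with n ≥ 1. Let φ(x₁), …, φ(x_n), φ(x_q) ∈ ℝ^d and y₁, …, y_n ∈ ℝ, and form the matrix Z ∈ ℝ^{(d+1)×(n+1)} whose i-th column is (φ(x_i), y_i) for 1 ≤ i ≤ n and whose last column is (φ(x_q), 0). Define LSA(Z) = Z + (1/n)·W_OV · Z · Zᵀ · W_KQ · Z, where W_OV ∈ ℝ^{(d+1)×(d+1)} is any matrix whose bottom row equals (0_dᵀ, 1), and W_KQ ∈ ℝ^{(d+1)×(d+1)} is block diagonal of the form [[Θ, 0_d], [0_dᵀ, c]] for some Θ ∈ ℝ^{d×d} and c ∈ ℝ. Then the bottom-right entry of LSA(Z) (the prediction ŷ) equals (1/n)·Σ_{i=1}^n y_i · φ(x_i)ᵀ Θ φ(x_q) = ⟨ω_f, φ(x_q)⟩, where ω_f = (1/n)·Σ_{i=1}^n y_i · Θᵀ φ(x_i). -/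
open Matrix

/-- Closed form of the task representation under simplified linear self-attention
(Proposition 3.9). With `Z` the prompt embedding matrix (columns `(φ(x_i), y_i)` and
final column `(φ(x_q), 0)`), `W_OV` any matrix with bottom row `(0_dᵀ, 1)`, and
`W_KQ = [[Θ, 0], [0, c]]` block diagonal, the bottom-right entry of
`LSA(Z) = Z + (1/n) • W_OV * Z * Zᵀ * W_KQ * Z` equals
`(1/n) Σ_i y_i · φ(x_i)ᵀ Θ φ(x_q) = ⟨ω_f, φ(x_q)⟩` with
`ω_f = (1/n) Σ_i y_i • Θᵀ φ(x_i)`. -/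
theorem lsa_closed_form
    (d n : ℕ) (hn : 1 ≤ n)
    (φx : Fin n → (Fin d → ℝ)) (y : Fin n → ℝ) (xq : Fin d → ℝ)
    (Θ : Matrix (Fin d) (Fin d) ℝ) (c : ℝ)
    (Z : Matrix (Fin (d + 1)) (Fin (n + 1)) ℝ)
    (hZ : ∀ (i : Fin (d + 1)) (j : Fin (n + 1)),
      Z i j =
        if hj : (j : ℕ) < n then
          (if hi : (i : ℕ) < d then φx ⟨j, hj⟩ ⟨i, hi⟩ else y ⟨j, hj⟩)
        else
          (if hi : (i : ℕ) < d then xq ⟨i, hi⟩ else 0))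
    (W_OV W_KQ : Matrix (Fin (d + 1)) (Fin (d + 1)) ℝ)
    (hOV : ∀ j : Fin (d + 1), W_OV (Fin.last d) j = if (j : ℕ) < d then 0 else 1)
    (hKQ : ∀ i j : Fin (d + 1),
      W_KQ i j =
        if hi : (i : ℕ) < d then
          (if hj : (j : ℕ) < d then Θ ⟨i, hi⟩ ⟨j, hj⟩ else 0)
        else
          (if (j : ℕ) < d then 0 else c)) :
    (Z + (n : ℝ)⁻¹ • (W_OV * Z * Zᵀ * W_KQ * Z)) (Fin.last d) (Fin.last n)
        = (n : ℝ)⁻¹ * ∑ i : Fin n, y i * (φx i ⬝ᵥ Θ.mulVec xq) ∧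
    (Z + (n : ℝ)⁻¹ • (W_OV * Z * Zᵀ * W_KQ * Z)) (Fin.last d) (Fin.last n)
        = ((n : ℝ)⁻¹ • ∑ i : Fin n, y i • Θᵀ.mulVec (φx i)) ⬝ᵥ xq := by
  -- basic entry facts
  have hZy : ∀ j : Fin n, Z (Fin.last d) (Fin.castSucc j) = y j := by
    intro j
    rw [hZ, dif_pos (by simpa using j.isLt), dif_neg (by simp)]
    simp
  have hZ00 : Z (Fin.last d) (Fin.last n) = 0 := by
    rw [hZ, dif_neg (by simp), dif_neg (by simp)]
  have hZq : ∀ i : Fin d, Z (Fin.castSucc i) (Fin.last n) = xq i := by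
    intro i
    rw [hZ, dif_neg (by simp), dif_pos (by simpa using i.isLt)]
    simp
  have hZφ : ∀ (i : Fin d) (j : Fin n),
      Z (Fin.castSucc i) (Fin.castSucc j) = φx j i := by
    intro i j
    rw [hZ, dif_pos (by simpa using j.isLt), dif_pos (by simpa using i.isLt)]
    simp
  -- inner product column computation
  have hinner : ∀ a : Fin (d + 1),
      (∑ b : Fin (d + 1), W_KQ a b * Z b (Fin.last n))
        = if ha : (a : ℕ) < d then Θ.mulVec xq ⟨a, ha⟩ else 0 := by
    intro a
    rw [Fin.sum_univ_castSucc]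
    by_cases ha : (a : ℕ) < d
    · rw [dif_pos ha]
      have h0 : W_KQ a (Fin.last d) = 0 := by
        rw [hKQ, dif_pos ha, dif_neg (by simp)]
      rw [h0, zero_mul, add_zero, Matrix.mulVec]
      simp only [dotProduct]
      refine Finset.sum_congr rfl fun b _ => ?_
      rw [hKQ, dif_pos ha, dif_pos (by simpa using b.isLt), hZq]
      simp
    · rw [dif_neg ha]
      have h0 : W_KQ a (Fin.last d) = c := by
        rw [hKQ, dif_neg ha, if_neg (by simp)]
      rw [h0, hZ00, mul_zero, add_zero]
      refine Finset.sum_eq_zero fun b _ => ?_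
      rw [hKQ, dif_neg ha, if_pos (by simpa using b.isLt), zero_mul]
  have hN : ∀ j : Fin n,
      (Zᵀ * (W_KQ * Z)) (Fin.castSucc j) (Fin.last n) = φx j ⬝ᵥ Θ.mulVec xq := by
    intro j
    rw [Matrix.mul_apply, Fin.sum_univ_castSucc]
    have hlast : Zᵀ (Fin.castSucc j) (Fin.last d) * (W_KQ * Z) (Fin.last d) (Fin.last n) = Zᵀ (Fin.castSucc j) (Fin.last d) * 0 := by
      congr 1
      rw [Matrix.mul_apply, hinner, dif_neg (by simp)]
    rw [hlast, mul_zero, add_zero]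
    simp only [dotProduct]
    refine Finset.sum_congr rfl fun i _ => ?_
    rw [Matrix.transpose_apply, hZφ, Matrix.mul_apply, hinner,
      dif_pos (by simpa using i.isLt)]
    simp
  -- bottom row of W_OV acts as projection
  have hproj : ∀ (M : Matrix (Fin (d + 1)) (Fin (n + 1)) ℝ) (j : Fin (n + 1)),
      (W_OV * M) (Fin.last d) j = M (Fin.last d) j := by
    intro M j
    rw [Matrix.mul_apply, Fin.sum_univ_castSucc]
    have h0 : ∀ k : Fin d,
        W_OV (Fin.last d) (Fin.castSucc k) * M (Fin.castSucc k) j = 0 := by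
      intro k
      rw [hOV, if_pos (by simpa using k.isLt), zero_mul]
    rw [Finset.sum_eq_zero (fun k _ => h0 k), zero_add, hOV,
      if_neg (by simp), one_mul]
  have key : (W_OV * Z * Zᵀ * W_KQ * Z) (Fin.last d) (Fin.last n)
      = ∑ i : Fin n, y i * (φx i ⬝ᵥ Θ.mulVec xq) := by
    have : W_OV * Z * Zᵀ * W_KQ * Z = W_OV * (Z * (Zᵀ * (W_KQ * Z))) := by
      simp only [Matrix.mul_assoc]
    rw [this, hproj, Matrix.mul_apply, Fin.sum_univ_castSucc, hZ00, zero_mul,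
      add_zero]
    refine Finset.sum_congr rfl fun j _ => ?_
    rw [hZy, hN]
  have hentry : (Z + (n : ℝ)⁻¹ • (W_OV * Z * Zᵀ * W_KQ * Z)) (Fin.last d) (Fin.last n)
      = (n : ℝ)⁻¹ * ∑ i : Fin n, y i * (φx i ⬝ᵥ Θ.mulVec xq) := by
    simp only [Matrix.add_apply, Matrix.smul_apply, hZ00, zero_add, key,
      smul_eq_mul]
  refine ⟨hentry, hentry.trans ?_⟩
  rw [smul_dotProduct, smul_eq_mul]
  congr 1
  have hterm : ∀ i : Fin n, y i * (φx i ⬝ᵥ Θ.mulVec xq)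
      = (y i • Θᵀ.mulVec (φx i)) ⬝ᵥ xq := by
    intro i
    rw [smul_dotProduct, Matrix.mulVec_transpose, smul_eq_mul,
      ← Matrix.dotProduct_mulVec]
  rw [Finset.sum_congr rfl fun i _ => hterm i]
  simp only [dotProduct, Finset.sum_apply, Finset.sum_mul]
  rw [Finset.sum_comm]
end

section
/- Linear independence of the logistic family (Step 2 of the proof of Theorem 3.10): Fix a real number a ≠ 0. For t > 0 define f_t : ℝ → ℝ by f_t(x) = 1/(1 + t·exp(−a·x)). Then for any pairwise distinct positive reals t₁, …, t_m, the functions f_{t₁}, …, f_{t_m} are linearly independent in the real vector space of functions ℝ → ℝ: if λ₁, …, λ_m ∈ ℝ satisfy Σ_{i=1}^m λ_i · f_{t_i}(x) = 0 for all x ∈ ℝ, then λ_i = 0 for all i. -/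
open Real Polynomial Finset

/-- Linear independence of the logistic family (Step 2 of the proof of
Theorem 3.10): for `a ≠ 0`, the functions `f_t(x) = 1/(1 + t·e^{−ax})` for pairwise
distinct positive `t₁, …, t_m` are linearly independent as functions `ℝ → ℝ`. -/
theorem logistic_family_linearly_independent
    (a : ℝ) (ha : a ≠ 0)
    (m : ℕ) (t : Fin m → ℝ) (ht : ∀ i, 0 < t i) (htinj : Function.Injective t)
    (lam : Fin m → ℝ)
    (h : ∀ x : ℝ, ∑ i : Fin m, lam i * (1 / (1 + t i * exp (-a * x))) = 0) :
    ∀ i : Fin m, lam i = 0 := by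
  -- Step 1: substitute u = exp(-a x), covering all u > 0
  have h1 : ∀ u : ℝ, 0 < u → ∑ i : Fin m, lam i * (1 / (1 + t i * u)) = 0 := by
    intro u hu
    have hx := h (-(Real.log u) / a)
    have he : Real.exp (-(a * (-Real.log u / a))) = u := by
      have : -(a * (-Real.log u / a)) = Real.log u := by field_simp
      rw [this, Real.exp_log hu]
    simpa [he] using hx
  -- positivity of denominators
  have hden : ∀ (u : ℝ), 0 < u → ∀ i : Fin m, (1 : ℝ) + t i * u ≠ 0 := by
    intro u hu i
    have : (0:ℝ) < 1 + t i * u := by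
      have := mul_pos (ht i) hu
      linarith
    exact ne_of_gt this
  -- Step 2: the polynomial obtained by clearing denominators
  set p : Polynomial ℝ :=
      ∑ i : Fin m, Polynomial.C (lam i) *
        ∏ j ∈ univ.erase i, (Polynomial.C (t j) * Polynomial.X + 1) with hp
  have hev : ∀ u : ℝ, p.eval u =
      ∑ i : Fin m, lam i * ∏ j ∈ univ.erase i, (t j * u + 1) := by
    intro u
    simp [hp, eval_finset_sum, eval_prod]
  have hroot : ∀ u : ℝ, 0 < u → p.eval u = 0 := by
    intro u hu
    rw [hev u]
    have : ∑ i : Fin m, lam i * ∏ j ∈ univ.erase i, (t j * u + 1) =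
        (∑ i : Fin m, lam i * (1 / (1 + t i * u))) * ∏ j : Fin m, (t j * u + 1) := by
      rw [Finset.sum_mul]
      refine Finset.sum_congr rfl ?_
      intro i _
      have hsplit : ∏ j : Fin m, (t j * u + 1) =
          (t i * u + 1) * ∏ j ∈ univ.erase i, (t j * u + 1) :=
        (Finset.mul_prod_erase univ _ (mem_univ i)).symm
      rw [hsplit]
      have hne : (1 : ℝ) + t i * u ≠ 0 := hden u hu i
      rw [show t i * u + 1 = 1 + t i * u by ring, ← mul_assoc, mul_assoc (lam i), one_div,
        inv_mul_cancel₀ hne, mul_one]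
    rw [this, h1 u hu, zero_mul]
  have hp0 : p = 0 := by
    apply Polynomial.eq_zero_of_infinite_isRoot
    apply Set.Infinite.mono (s := Set.Ioi (0:ℝ))
    · exact fun u hu => hroot u hu
    · exact Set.Ioi_infinite 0
  -- Step 3: evaluate at u = -(t i)⁻¹
  intro i
  have hti : t i ≠ 0 := ne_of_gt (ht i)
  have hev2 : p.eval (-(t i)⁻¹) = 0 := by rw [hp0]; simp
  rw [hev (-(t i)⁻¹)] at hev2
  have hvanish : ∀ k ∈ (univ : Finset (Fin m)), k ≠ i →
      lam k * ∏ j ∈ univ.erase k, (t j * (-(t i)⁻¹) + 1) = 0 := by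
    intro k _ hk
    have hik : i ∈ univ.erase k := Finset.mem_erase.2 ⟨fun hc => hk hc.symm, mem_univ i⟩
    have : ∏ j ∈ univ.erase k, (t j * (-(t i)⁻¹) + 1) = 0 := by
      apply Finset.prod_eq_zero hik
      field_simp
      norm_num
    rw [this, mul_zero]
  have hsum : ∑ k : Fin m, lam k * ∏ j ∈ univ.erase k, (t j * (-(t i)⁻¹) + 1) =
      lam i * ∏ j ∈ univ.erase i, (t j * (-(t i)⁻¹) + 1) :=
    Finset.sum_eq_single i (fun k hk hki => hvanish k hk hki) (fun hi => absurd (mem_univ i) hi)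
  rw [hsum] at hev2
  have hprod : ∏ j ∈ univ.erase i, (t j * (-(t i)⁻¹) + 1) ≠ 0 := by
    apply Finset.prod_ne_zero_iff.2
    intro j hj
    have hji : j ≠ i := (Finset.mem_erase.1 hj).1
    have htj : t j ≠ t i := fun hc => hji (htinj hc)
    intro hc
    apply htj
    field_simp at hc
    linarith
  exact (mul_eq_zero.1 hev2).resolve_right hprod
end

section
/- Infinite-dimensionality of the span of the logistic family (Step 2 of the proof of Theorem 3.10): Fix a real number a ≠ 0 and for t > 0 define f_t : ℝ → ℝ by f_t(x) = 1/(1 + t·exp(−a·x)). Then the family (f_t)_{t>0} is linearly independent in the real vector space of functions ℝ → ℝ, and consequently the linear span of {f_t | t > 0} is an infinite-dimensional subspace of the space of functions ℝ → ℝ. -/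
open Real Polynomial

lemma logistic_key (s : Finset {t : ℝ // 0 < t}) (g : {t : ℝ // 0 < t} → ℝ)
    (h : ∀ u : ℝ, 0 < u → ∑ k ∈ s, g k / (1 + k.1 * u) = 0) :
    ∀ i ∈ s, g i = 0 := by
  intro i hi
  set P : Polynomial ℝ :=
    ∑ k ∈ s, Polynomial.C (g k) * ∏ j ∈ s.erase k, (1 + Polynomial.C j.1 * Polynomial.X) with hP
  have hpos : ∀ (u : ℝ), 0 < u → ∀ (k : {t : ℝ // 0 < t}), (0:ℝ) < 1 + k.1 * u := by
    intro u hu k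
    have := mul_pos k.2 hu
    linarith
  have hP0 : P = 0 := by
    apply Polynomial.eq_zero_of_infinite_isRoot
    apply Set.Infinite.mono (s := Set.Ioi (0:ℝ)) ?_
    · exact Set.Ioi_infinite 0
    intro u hu
    simp only [Set.mem_setOf_eq, IsRoot, hP, eval_finset_sum, eval_mul, eval_C,
      eval_prod, eval_add, eval_one, eval_X]
    have : ∀ k ∈ s, g k * ∏ j ∈ s.erase k, (1 + j.1 * u)
        = (g k / (1 + k.1 * u)) * ∏ j ∈ s, (1 + j.1 * u) := by
      intro k hk
      rw [← Finset.mul_prod_erase s _ hk]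
      have h1 := (hpos u hu k).ne'
      rw [div_mul_eq_mul_div, eq_div_iff h1]
      ring
    rw [Finset.sum_congr rfl this, ← Finset.sum_mul, h u hu, zero_mul]
  have heval := congrArg (Polynomial.eval (-1 / i.1)) hP0
  have hine : i.1 ≠ 0 := i.2.ne'
  simp only [hP, eval_finset_sum, eval_mul, eval_C, eval_prod, eval_add, eval_one, eval_X,
    eval_zero] at heval
  rw [Finset.sum_eq_single i] at heval
  · have hprod : ∏ j ∈ s.erase i, (1 + j.1 * (-1 / i.1)) ≠ 0 := by
      apply Finset.prod_ne_zero_iff.mpr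
      intro j hj
      have hji : j ≠ i := Finset.ne_of_mem_erase hj
      have : (j.1 : ℝ) ≠ i.1 := fun hc => hji (Subtype.ext hc)
      field_simp
      intro hc
      exact this (by have := (div_eq_zero_iff.mp hc).resolve_right hine; linarith)
    exact (mul_eq_zero.mp heval).resolve_right hprod
  · intro k hk hki
    have : (1 + i.1 * (-1 / i.1)) = 0 := by field_simp; norm_num
    rw [Finset.prod_eq_zero (Finset.mem_erase.mpr ⟨Ne.symm hki, hi⟩) this, mul_zero]
  · intro h'; exact absurd hi h'

/-- Infinite-dimensionality of the span of the logistic family (Step 2 of the proof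
of Theorem 3.10): for `a ≠ 0`, the family `(f_t)_{t>0}` with
`f_t(x) = 1/(1 + t·e^{−ax})` is linearly independent in the space of functions
`ℝ → ℝ`, and its span is infinite-dimensional. -/
theorem logistic_family_span_infinite_dimensional (a : ℝ) (ha : a ≠ 0) :
    LinearIndependent ℝ
      (fun t : {t : ℝ // 0 < t} => fun x : ℝ => 1 / (1 + t.1 * exp (-a * x))) ∧
    ¬ FiniteDimensional ℝ
      ↥(Submodule.span ℝ (Set.range
        (fun t : {t : ℝ // 0 < t} => fun x : ℝ => 1 / (1 + t.1 * exp (-a * x))))) := by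
  have hLI : LinearIndependent ℝ
      (fun t : {t : ℝ // 0 < t} => fun x : ℝ => 1 / (1 + t.1 * exp (-a * x))) := by
    rw [linearIndependent_iff']
    intro s g hsum i hi
    apply logistic_key s g _ i hi
    intro u hu
    have hx : ∃ x : ℝ, exp (-a * x) = u := by
      refine ⟨-(Real.log u) / a, ?_⟩
      rw [show -a * (-(Real.log u) / a) = Real.log u by field_simp]
      exact Real.exp_log hu
    obtain ⟨x, hxu⟩ := hx
    have := congrFun hsum x
    simp only [Finset.sum_apply, Pi.smul_apply, smul_eq_mul, Pi.zero_apply, hxu] at this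
    simpa [mul_one_div, div_eq_mul_inv] using this
  refine ⟨hLI, ?_⟩
  intro hFD
  haveI : Infinite {t : ℝ // 0 < t} := by
    have : (Set.Ioi (0:ℝ)).Infinite := Set.Ioi_infinite 0
    exact Set.infinite_coe_iff.mpr this
  have hspan := linearIndependent_span hLI
  have hcard := hspan.lt_aleph0_of_finiteDimensional
  exact absurd hcard (not_lt.mpr (Cardinal.infinite_iff.mp ‹Infinite {t : ℝ // 0 < t}›))
end

section
/- Entangled structure under general softmax self-attention, concrete form (Theorem 3.10): Fix a real number a ≠ 0 and for t > 0 define f_t : ℝ → ℝ by f_t(x) = 1/(1 + t·exp(−a·x)). Then there do NOT exist a natural number d, a map φ₀ : ℝ → ℝ^d, and a map ω : (0, ∞) → ℝ^d such that f_t(x) = ⟨ω(t), φ₀(x)⟩ for all t > 0 and all x ∈ ℝ. -/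
open Matrix Real

open Polynomial Finset

/-- Key independence lemma: if ∑ c_j / (1 + t_j * u) = 0 for all u > 0, with
the t_j distinct and positive, then all c_j = 0. -/
lemma indep_aux {n : ℕ} (t : Fin n → ℝ) (ht : ∀ j, 0 < t j)
    (htinj : Function.Injective t) (c : Fin n → ℝ)
    (h : ∀ u : ℝ, 0 < u → ∑ j, c j / (1 + t j * u) = 0) :
    ∀ j, c j = 0 := by
  set P : ℝ[X] := ∑ j, Polynomial.C (c j) * ∏ i ∈ univ.erase j, (1 + Polynomial.C (t i) * X)
    with hP
  have hpos : ∀ j (u : ℝ), 0 < u → 0 < 1 + t j * u := fun j u hu => by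
    have := mul_pos (ht j) hu; linarith
  have hevalP : ∀ u : ℝ, 0 < u → P.eval u = 0 := by
    intro u hu
    have hne : ∀ j : Fin n, (1 + t j * u) ≠ 0 := fun j => (hpos j u hu).ne'
    have : P.eval u = (∑ j, c j / (1 + t j * u)) * ∏ i, (1 + t i * u) := by
      rw [Finset.sum_mul, hP]
      simp only [eval_finset_sum, eval_mul, eval_C, eval_prod, eval_add, eval_one, eval_X]
      refine Finset.sum_congr rfl fun j _ => ?_
      rw [div_mul_eq_mul_div, ← Finset.mul_prod_erase univ _ (mem_univ j),
        mul_left_comm, mul_div_cancel_left₀ _ (hne j)]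
    rw [this, h u hu, zero_mul]
  have hP0 : P = 0 := by
    apply P.eq_zero_of_infinite_isRoot
    apply Set.Infinite.mono _ (Set.Ioi_infinite (0:ℝ))
    intro u hu
    exact hevalP u hu
  intro j
  have := congrArg (Polynomial.eval (-(1 / t j))) hP0
  rw [hP] at this
  simp only [eval_finset_sum, eval_mul, eval_C, eval_prod, eval_add, eval_one, eval_X,
    eval_zero] at this
  have hzero : ∀ i ∈ univ.erase j, (i : Fin n) ≠ j →
      True := fun _ _ _ => trivial
  -- sum reduces to the j-th term since other terms contain factor 1 + t j * (-(1/t j)) = 0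
  rw [Finset.sum_eq_single j] at this
  · -- c j * ∏_{i ≠ j} (1 - t i / t j) = 0  and the product is nonzero
    have hprod : ∏ i ∈ univ.erase j, (1 + t i * -(1 / t j)) ≠ 0 := by
      apply Finset.prod_ne_zero_iff.2
      intro i hi
      have hij : t i ≠ t j := fun hh => (Finset.mem_erase.1 hi).1 (htinj hh)
      have htj : t j ≠ 0 := (ht j).ne'
      field_simp
      intro hcontra
      exact hij (by have := (div_eq_zero_iff.1 hcontra).resolve_right htj; linarith)
    exact (mul_eq_zero.1 this).resolve_right hprod
  · intro i _ hij
    have : (1 + t j * -(1 / t j)) = 0 := by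
      have := (ht j).ne'
      field_simp
      norm_num
    rw [Finset.prod_eq_zero (Finset.mem_erase.2 ⟨hij.symm, mem_univ j⟩) this, mul_zero]
  · intro hj; exact absurd (mem_univ j) hj

/-- Entangled structure under general softmax self-attention, concrete form
(Theorem 3.10): for `a ≠ 0`, the logistic family `f_t(x) = 1/(1 + t·e^{−ax})`,
`t > 0`, admits no bilinear decomposition `f_t(x) = ⟨ω(t), φ₀(x)⟩` with a fixed
finite-dimensional feature map `φ₀` and context-only coefficients `ω`. -/
theorem no_bilinear_decomposition_of_softmax_attention (a : ℝ) (ha : a ≠ 0) :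
    ¬ ∃ (d : ℕ) (φ₀ : ℝ → (Fin d → ℝ)) (ω : ℝ → (Fin d → ℝ)),
        ∀ t : ℝ, 0 < t → ∀ x : ℝ,
          1 / (1 + t * exp (-a * x)) = ω t ⬝ᵥ φ₀ x := by
  classical
  rintro ⟨d, φ₀, ω, h⟩
  set t : Fin (d+1) → ℝ := fun j => (j : ℝ) + 1 with htdef
  have ht : ∀ j, 0 < t j := fun j => by positivity
  have htinj : Function.Injective t := by
    intro i j hij
    have : ((i : ℕ) : ℝ) = ((j : ℕ) : ℝ) := by simpa [htdef] using hij
    exact Fin.ext (Nat.cast_injective this)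
  set f : Fin (d+1) → (ℝ → ℝ) := fun j x => 1 / (1 + t j * exp (-a * x)) with hfdef
  set g : Fin d → (ℝ → ℝ) := fun i x => φ₀ x i with hgdef
  set V : Submodule ℝ (ℝ → ℝ) := Submodule.span ℝ (Set.range g) with hVdef
  have hmem : ∀ j, f j ∈ V := by
    intro j
    have hfj : f j = ∑ i, ω (t j) i • g i := by
      funext x
      rw [hfdef]
      simp only
      rw [h (t j) (ht j) x]
      simp [dotProduct, hgdef]
    rw [hfj]
    exact Submodule.sum_mem _ fun i _ =>
      Submodule.smul_mem _ _ (Submodule.subset_span ⟨i, rfl⟩)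
  have hli : LinearIndependent ℝ f := by
    rw [Fintype.linearIndependent_iff]
    intro c hc
    apply indep_aux t ht htinj c
    intro u hu
    have hx := congrFun hc (-(Real.log u) / a)
    have hexp : exp (-a * (-(Real.log u) / a)) = u := by
      rw [show -a * (-(Real.log u) / a) = Real.log u by field_simp]
      exact Real.exp_log hu
    simp only [hfdef, Finset.sum_apply, Pi.smul_apply, smul_eq_mul, Pi.zero_apply] at hx
    rw [hexp] at hx
    simpa [div_eq_mul_inv] using hx
  have hfin : FiniteDimensional ℝ V := FiniteDimensional.span_of_finite ℝ (Set.finite_range g)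
  set f' : Fin (d+1) → V := fun j => ⟨f j, hmem j⟩ with hf'def
  have hli' : LinearIndependent ℝ f' := by
    apply LinearIndependent.of_comp V.subtype
    exact hli
  have h1 : Fintype.card (Fin (d+1)) ≤ Module.finrank ℝ V :=
    hli'.fintype_card_le_finrank
  have h2 : Module.finrank ℝ V ≤ d := by
    have := finrank_span_le_card (R := ℝ) (Set.range g)
    refine this.trans ?_
    rw [Set.toFinset_range]
    exact (Finset.card_image_le).trans (by simp)
  simp only [Fintype.card_fin] at h1
  omega
end
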